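/- Fix an integer n ≥ 1 and set c = 1 + 1/log T. For T sufficiently large, |∫_{1}^{T} (ζ'/ζ)(c + it) · ζ^{(n)}(c + it) dt| ≪ log^{n+3} T. -/

import Mathlib

open Complex MeasureTheory Set LSeries ArithmeticFunction
open scoped LSeries.notation

/-- quantitative zeta tail bound -/
lemma sumZ {ε : ℝ} (hε : 0 < ε) : ∑' k : ℕ, (k : ℝ) ^ (-(1 + ε)) ≤ 1 + 1 / ε := by
  have hsum : Summable (fun k : ℕ => (k : ℝ) ^ (-(1 + ε))) :=
    Real.summable_nat_rpow.mpr (by linarith)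
  have h0 : ((0 : ℕ) : ℝ) ^ (-(1 + ε)) = 0 := by
    rw [Nat.cast_zero, Real.zero_rpow (by linarith)]
  rw [hsum.tsum_eq_zero_add, Summable.tsum_eq_zero_add (by exact (summable_nat_add_iff 1).mpr hsum),
    h0, zero_add]
  simp only [Nat.cast_add, Nat.cast_one, Nat.cast_zero, zero_add, Real.one_rpow]
  have key : ∑' (i : ℕ), ((i : ℝ) + 1 + 1) ^ (-(1 + ε)) ≤ 1 / ε := by
    apply Real.tsum_le_of_sum_range_le
    · intro k
      positivity
    · intro N
      have hanti : AntitoneOn (fun x : ℝ => x ^ (-(1 + ε))) (Icc 1 (1 + (N : ℝ))) := by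
        intro x hx y hy hxy
        exact Real.rpow_le_rpow_of_nonpos (lt_of_lt_of_le one_pos hx.1) hxy (by linarith)
      have h2 := hanti.sum_le_integral
      have hint : ∫ x in (1 : ℝ)..(1 + (N : ℝ)), x ^ (-(1 + ε))
          = ((1 + (N : ℝ)) ^ (-(1 + ε) + 1) - 1 ^ (-(1 + ε) + 1)) / (-(1 + ε) + 1) := by
        apply integral_rpow
        refine Or.inr ⟨fun h => hε.ne' (by linarith), ?_⟩
        rw [Set.uIcc_of_le (by have := Nat.cast_nonneg (α := ℝ) N; linarith)]
        rintro ⟨ha, -⟩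
        norm_num at ha
      have heq : ∑ i ∈ Finset.range N, ((i : ℝ) + 1 + 1) ^ (-(1 + ε))
          = ∑ i ∈ Finset.range N, (fun x : ℝ => x ^ (-(1 + ε))) (1 + ((i + 1 : ℕ) : ℝ)) := by
        apply Finset.sum_congr rfl; intro i _; push_cast; ring_nf
      rw [heq]
      refine h2.trans ?_
      rw [hint]
      have he : -(1 + ε) + 1 = -ε := by ring
      rw [he, Real.one_rpow]
      have hA : (0:ℝ) ≤ (1 + (N : ℝ)) ^ (-ε) := Real.rpow_nonneg (by positivity) _
      have : ((1 + (N : ℝ)) ^ (-ε) - 1) / (-ε) = (1 - (1 + (N : ℝ)) ^ (-ε)) / ε := by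
        rw [div_neg, ← neg_div, neg_sub]
      rw [this]
      gcongr
      linarith
  linarith

lemma log_nat_nonneg (k : ℕ) : 0 ≤ Real.log k := by
  rcases Nat.eq_zero_or_pos k with rfl | hk
  · simp
  · exact Real.log_nonneg (by exact_mod_cast hk)

lemma termB {j : ℕ} (hj : 1 ≤ j) {d : ℝ} (hd : 0 < d) (k : ℕ) :
    Real.log k ^ j * (k : ℝ) ^ (-(1 + d)) ≤ (2 * j / d) ^ j * (k : ℝ) ^ (-(1 + d / 2)) := by
  rcases Nat.eq_zero_or_pos k with rfl | hk
  · simp only [Nat.cast_zero, Real.log_zero, zero_pow (by omega : j ≠ 0),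
      Real.zero_rpow (show -(1 + d) ≠ 0 by intro h; linarith),
      Real.zero_rpow (show -(1 + d / 2) ≠ 0 by intro h; linarith), zero_mul, mul_zero, le_refl]
  have hk1 : (1 : ℝ) ≤ (k : ℝ) := by exact_mod_cast hk
  have hk0 : (0 : ℝ) < (k : ℝ) := by linarith
  have hj0 : (0 : ℝ) < (j : ℝ) := by exact_mod_cast hj
  have he : (0 : ℝ) < d / (2 * j) := by positivity
  have hlog : Real.log k ≤ (2 * j / d) * (k : ℝ) ^ (d / (2 * j)) := by
    have h1 := Real.log_le_rpow_div (Nat.cast_nonneg k) he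
    have h2 : (k : ℝ) ^ (d / (2 * j)) / (d / (2 * j))
        = (2 * j / d) * (k : ℝ) ^ (d / (2 * j)) := by
      field_simp
    linarith [h2 ▸ h1]
  have hpow : Real.log k ^ j ≤ (2 * j / d) ^ j * (k : ℝ) ^ (d / 2) := by
    have h3 := pow_le_pow_left₀ (Real.log_nonneg hk1) hlog j
    rw [mul_pow] at h3
    have h4 : ((k : ℝ) ^ (d / (2 * j))) ^ j = (k : ℝ) ^ (d / 2) := by
      rw [← Real.rpow_natCast ((k : ℝ) ^ (d / (2 * j))) j, ← Real.rpow_mul hk0.le]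
      congr 1
      field_simp
    rwa [h4] at h3
  calc Real.log k ^ j * (k : ℝ) ^ (-(1 + d))
      ≤ (2 * j / d) ^ j * (k : ℝ) ^ (d / 2) * (k : ℝ) ^ (-(1 + d)) :=
        mul_le_mul_of_nonneg_right hpow (Real.rpow_nonneg hk0.le _)
    _ = (2 * j / d) ^ j * (k : ℝ) ^ (-(1 + d / 2)) := by
        rw [mul_assoc, ← Real.rpow_add hk0]
        congr 2
        ring

lemma sumS_summable {j : ℕ} (hj : 1 ≤ j) {d : ℝ} (hd : 0 < d) :
    Summable (fun k : ℕ => Real.log k ^ j * (k : ℝ) ^ (-(1 + d))) := by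
  refine Summable.of_nonneg_of_le (fun k => ?_) (termB hj hd) ?_
  · exact mul_nonneg (pow_nonneg (log_nat_nonneg k) j) (Real.rpow_nonneg (Nat.cast_nonneg k) _)
  · exact (Real.summable_nat_rpow.mpr (by linarith)).mul_left _

lemma sumS {j : ℕ} (hj : 1 ≤ j) {d : ℝ} (hd : 0 < d) (hd1 : d ≤ 1) :
    ∑' k : ℕ, Real.log k ^ j * (k : ℝ) ^ (-(1 + d)) ≤ 3 * (2 * j) ^ j / d ^ (j + 1) := by
  have hmaj : Summable (fun k : ℕ => (2 * j / d) ^ j * (k : ℝ) ^ (-(1 + d / 2))) :=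
    (Real.summable_nat_rpow.mpr (by linarith)).mul_left _
  calc ∑' k : ℕ, Real.log k ^ j * (k : ℝ) ^ (-(1 + d))
      ≤ ∑' k : ℕ, (2 * j / d) ^ j * (k : ℝ) ^ (-(1 + d / 2)) :=
        Summable.tsum_le_tsum (termB hj hd) (sumS_summable hj hd) hmaj
    _ = (2 * j / d) ^ j * ∑' k : ℕ, (k : ℝ) ^ (-(1 + d / 2)) := tsum_mul_left
    _ ≤ (2 * j / d) ^ j * (1 + 1 / (d / 2)) := by
        refine mul_le_mul_of_nonneg_left (sumZ (by positivity)) (by positivity)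
    _ ≤ 3 * (2 * j) ^ j / d ^ (j + 1) := by
        have h1 : ((2 * j : ℝ) / d) ^ j = (2 * j : ℝ) ^ j / d ^ j := div_pow _ _ _
        have h2 : 1 + 1 / (d / 2) ≤ 3 / d := by
          rw [one_div, inv_div]
          have h3 : 1 ≤ 1 / d := by rw [le_div_iff₀ hd]; linarith
          have h4 : 1 / d + 2 / d = 3 / d := by ring
          linarith
        refine le_trans (mul_le_mul_of_nonneg_left h2 (by positivity)) ?_
        rw [h1, pow_succ]
        ring_nf
        exact le_refl _

lemma logMul_iterate (n : ℕ) (k : ℕ) :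
    (LSeries.logMul)^[n] (1 : ℕ → ℂ) k = (Complex.log k) ^ n := by
  induction n with
  | zero => simp
  | succ m ih =>
      rw [Function.iterate_succ_apply', LSeries.logMul, ih, pow_succ]
      ring

lemma norm_term_vonMangoldt {d : ℝ} {z : ℂ} (hz : z.re = 1 + d) (m : ℕ) :
    ‖term ↗Λ z m‖ ≤ Real.log m ^ 1 * (m : ℝ) ^ (-(1 + d)) := by
  rw [norm_term_eq]
  rcases eq_or_ne m 0 with rfl | hm
  · simp only [if_pos rfl]
    exact mul_nonneg (pow_nonneg (log_nat_nonneg 0) 1) (Real.rpow_nonneg (by norm_num) _)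
  · rw [if_neg hm, hz, pow_one]
    have hm0 : (0 : ℝ) < (m : ℝ) := by exact_mod_cast Nat.pos_of_ne_zero hm
    rw [Real.rpow_neg hm0.le, ← div_eq_mul_inv]
    have : ‖((Λ m : ℝ) : ℂ)‖ = Λ m := by
      rw [Complex.norm_real, Real.norm_eq_abs, _root_.abs_of_nonneg vonMangoldt_nonneg]
    rw [this]
    gcongr
    exact vonMangoldt_le_log

lemma norm_term_logpow {d : ℝ} {z : ℂ} (hz : z.re = 1 + d) (n : ℕ) (k : ℕ) :
    ‖term (LSeries.logMul^[n] (1 : ℕ → ℂ)) z k‖ ≤ Real.log k ^ n * (k : ℝ) ^ (-(1 + d)) := by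
  rw [norm_term_eq]
  rcases eq_or_ne k 0 with rfl | hk
  · simp only [if_pos rfl]
    exact mul_nonneg (pow_nonneg (log_nat_nonneg 0) n) (Real.rpow_nonneg (by norm_num) _)
  · rw [if_neg hk, hz, logMul_iterate]
    have hk0 : (0 : ℝ) < (k : ℝ) := by exact_mod_cast Nat.pos_of_ne_zero hk
    rw [Real.rpow_neg hk0.le, ← div_eq_mul_inv]
    have : ‖(Complex.log k) ^ n‖ = Real.log k ^ n := by
      rw [norm_pow, ← Complex.natCast_log, Complex.norm_real, Real.norm_eq_abs,
        _root_.abs_of_nonneg (log_nat_nonneg k)]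
    rw [this]

lemma summable_norm_term_vonMangoldt {d : ℝ} (hd : 0 < d) {z : ℂ} (hz : z.re = 1 + d) :
    Summable (fun m : ℕ => ‖term ↗Λ z m‖) :=
  Summable.of_nonneg_of_le (fun _ => norm_nonneg _) (norm_term_vonMangoldt hz)
    (sumS_summable le_rfl hd)

lemma summable_norm_term_logpow {n : ℕ} (hn : 1 ≤ n) {d : ℝ} (hd : 0 < d) {z : ℂ}
    (hz : z.re = 1 + d) :
    Summable (fun k : ℕ => ‖term (LSeries.logMul^[n] (1 : ℕ → ℂ)) z k‖) :=
  Summable.of_nonneg_of_le (fun _ => norm_nonneg _) (norm_term_logpow hz n)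
    (sumS_summable hn hd)

/-- for `T` sufficiently large and `c = 1 + 1/log T`,
`|∫_1^T (ζ'/ζ)(c+it) ζ^{(n)}(c+it) dt| ≪ log^{n+3} T`. -/
theorem right_contour_bound (n : ℕ) (hn : 1 ≤ n) :
    ∃ K > (0 : ℝ), ∃ T₀ : ℝ, ∀ T ≥ T₀, ∀ c : ℝ, c = 1 + 1 / Real.log T →
      ‖∫ t in (1 : ℝ)..T,
          deriv riemannZeta (↑c + ↑t * I) / riemannZeta (↑c + ↑t * I) *
            iteratedDeriv n riemannZeta (↑c + ↑t * I)‖ ≤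
        K * Real.log T ^ (n + 3) := by
  have h2n : (0 : ℝ) < 2 * n := by
    have : (1 : ℝ) ≤ (n : ℝ) := by exact_mod_cast hn
    linarith
  refine ⟨54 * (2 * (n : ℝ)) ^ n, by positivity, 3, fun T hT c hc => ?_⟩
  set lgT := Real.log T with hL
  have hT3 : (3 : ℝ) ≤ T := hT
  have hT1 : (1 : ℝ) ≤ T := by linarith
  have hL1 : 1 ≤ lgT := by
    rw [hL]
    have hexp : Real.exp 1 ≤ T := by
      have := Real.exp_one_lt_d9
      linarith
    calc (1 : ℝ) = Real.log (Real.exp 1) := (Real.log_exp 1).symm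
      _ ≤ Real.log T := Real.log_le_log (Real.exp_pos 1) hexp
  have hLpos : 0 < lgT := by linarith
  set d : ℝ := 1 / lgT with hd
  have hd0 : 0 < d := by rw [hd]; positivity
  have hd1 : d ≤ 1 := by rw [hd, div_le_one hLpos]; linarith
  have hcd : c = 1 + d := by rw [hc, hd]
  have hc1 : 1 < c := by rw [hcd]; linarith
  set g : ℕ → ℂ := LSeries.logMul^[n] (1 : ℕ → ℂ) with hg
  have hre : ∀ t : ℝ, ((c : ℂ) + (t : ℂ) * I).re = 1 + d := by
    intro t
    simp [Complex.add_re, Complex.mul_re, hcd]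
  have hcre : ((c : ℝ) : ℂ).re = 1 + d := by simp [hcd]
  -- Step 1: rewrite the integrand
  have hrw : ∀ t : ℝ,
      deriv riemannZeta (↑c + ↑t * I) / riemannZeta (↑c + ↑t * I) *
        iteratedDeriv n riemannZeta (↑c + ↑t * I)
      = (-1 : ℂ) ^ (n + 1) *
          (LSeries ↗Λ ((c : ℂ) + (t : ℂ) * I) * LSeries g ((c : ℂ) + (t : ℂ) * I)) := by
    intro t
    set z : ℂ := (c : ℂ) + (t : ℂ) * I with hz'
    have hz : 1 < z.re := by rw [hz', hre t]; linarith
    have h1 : deriv riemannZeta z / riemannZeta z = - LSeries ↗Λ z := by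
      have h := ArithmeticFunction.LSeries_vonMangoldt_eq_deriv_riemannZeta_div hz
      rw [h]; ring
    have h2 : iteratedDeriv n riemannZeta z = iteratedDeriv n (LSeries 1) z := by
      refine (Filter.EventuallyEq.iteratedDeriv_eq n ?_).symm
      exact Filter.eventuallyEq_of_mem
        ((isOpen_lt continuous_const Complex.continuous_re).mem_nhds hz)
        fun w hw => LSeries_one_eq_riemannZeta hw
    have h3 : iteratedDeriv n (LSeries 1) z = (-1 : ℂ) ^ n * LSeries g z := by
      rw [hg]
      exact LSeries_iteratedDeriv n
        (by rw [LSeries.abscissaOfAbsConv_one]; exact_mod_cast hz)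
    rw [h1, h2, h3]
    ring
  have hint_eq : (∫ t in (1 : ℝ)..T,
        deriv riemannZeta (↑c + ↑t * I) / riemannZeta (↑c + ↑t * I) *
          iteratedDeriv n riemannZeta (↑c + ↑t * I))
      = (-1 : ℂ) ^ (n + 1) * ∫ t in (1 : ℝ)..T,
          LSeries ↗Λ ((c : ℂ) + (t : ℂ) * I) * LSeries g ((c : ℂ) + (t : ℂ) * I) := by
    rw [← intervalIntegral.integral_const_mul]
    exact intervalIntegral.integral_congr fun t _ => hrw t
  rw [hint_eq, norm_mul, norm_pow, norm_neg, norm_one, one_pow, one_mul]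
  -- Step 2: definitions
  set B : ℕ × ℕ → ℂ := fun p => term ↗Λ ((c : ℝ) : ℂ) p.1 * term g ((c : ℝ) : ℂ) p.2 with hB
  set F : ℕ × ℕ → ℝ → ℂ :=
    fun p t => term ↗Λ ((c : ℂ) + (t : ℂ) * I) p.1 * term g ((c : ℂ) + (t : ℂ) * I) p.2 with hF
  set bb : ℕ × ℕ → ℂ := fun p => -((Real.log p.1 + Real.log p.2 : ℝ) : ℂ) * I with hbb
  have hterm : ∀ (f : ℕ → ℂ) (m : ℕ) (t : ℝ), term f ((c : ℂ) + (t : ℂ) * I) m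
      = term f ((c : ℝ) : ℂ) m * Complex.exp (-((Real.log m : ℝ) : ℂ) * I * (t : ℂ)) := by
    intro f m t
    rcases eq_or_ne m 0 with rfl | hm
    · simp
    · have hm0 : (m : ℂ) ≠ 0 := Nat.cast_ne_zero.mpr hm
      rw [LSeries.term_of_ne_zero hm, LSeries.term_of_ne_zero hm,
        Complex.cpow_add _ _ hm0, Complex.cpow_def_of_ne_zero hm0 ((t : ℂ) * I),
        ← Complex.natCast_log, ← div_div, div_eq_mul_inv, ← Complex.exp_neg]
      congr 1
      ring
  have hFB : ∀ p t, F p t = B p * Complex.exp (bb p * (t : ℂ)) := by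
    intro p t
    simp only [hF, hB, hbb]
    rw [hterm ↗Λ p.1 t, hterm g p.2 t, mul_mul_mul_comm, ← Complex.exp_add]
    congr 1
    push_cast
    ring
  have hnormF : ∀ p t, ‖F p t‖ = ‖B p‖ := by
    intro p t
    rw [hFB p t, norm_mul]
    have hre0 : (bb p * (t : ℂ)).re = 0 := by
      simp only [hbb, neg_mul, Complex.neg_re, Complex.mul_re, Complex.mul_im,
        Complex.ofReal_re, Complex.ofReal_im, Complex.I_re, Complex.I_im]
      ring
    rw [Complex.norm_exp, hre0, Real.exp_zero, mul_one]
  have hIntF : ∀ p : ℕ × ℕ, IntegrableOn (F p) (Set.Ioc (1 : ℝ) T) := by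
    intro p
    have hcont : Continuous (fun t : ℝ => B p * Complex.exp (bb p * (t : ℂ))) :=
      continuous_const.mul (Complex.continuous_exp.comp
        (continuous_const.mul Complex.continuous_ofReal))
    have : F p = fun t : ℝ => B p * Complex.exp (bb p * (t : ℂ)) := funext (hFB p)
    rw [this]
    exact hcont.integrableOn_Ioc
  have hSA : Summable fun m : ℕ => ‖term ↗Λ ((c : ℝ) : ℂ) m‖ :=
    summable_norm_term_vonMangoldt hd0 hcre
  have hSg : Summable fun k : ℕ => ‖term g ((c : ℝ) : ℂ) k‖ := by
    rw [hg]; exact summable_norm_term_logpow hn hd0 hcre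
  have hsumB : Summable fun p : ℕ × ℕ => ‖B p‖ := by
    have h := hSA.mul_of_nonneg hSg (fun _ => norm_nonneg _) (fun _ => norm_nonneg _)
    refine h.congr fun p => ?_
    simp only [hB, norm_mul]
  have htsumB : ∑' p : ℕ × ℕ, ‖B p‖
      = (∑' m : ℕ, ‖term ↗Λ ((c : ℝ) : ℂ) m‖) * ∑' k : ℕ, ‖term g ((c : ℝ) : ℂ) k‖ := by
    rw [tsum_mul_tsum_of_summable_norm (by simpa using hSA) (by simpa using hSg)]
    exact tsum_congr fun p => by simp only [hB, norm_mul]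
  have hprod : ∀ t : ℝ,
      LSeries ↗Λ ((c : ℂ) + (t : ℂ) * I) * LSeries g ((c : ℂ) + (t : ℂ) * I)
        = ∑' p : ℕ × ℕ, F p t := by
    intro t
    have h1 : Summable fun m : ℕ => ‖term ↗Λ ((c : ℂ) + (t : ℂ) * I) m‖ :=
      summable_norm_term_vonMangoldt hd0 (hre t)
    have h2 : Summable fun k : ℕ => ‖term g ((c : ℂ) + (t : ℂ) * I) k‖ := by
      rw [hg]; exact summable_norm_term_logpow hn hd0 (hre t)
    exact tsum_mul_tsum_of_summable_norm h1 h2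
  have hswap : (∫ t in Set.Ioc (1 : ℝ) T, ∑' p : ℕ × ℕ, F p t)
      = ∑' p : ℕ × ℕ, ∫ t in Set.Ioc (1 : ℝ) T, F p t := by
    refine (integral_tsum_of_summable_integral_norm (fun p => hIntF p) ?_).symm
    have heq : ∀ p : ℕ × ℕ, (∫ t in Set.Ioc (1 : ℝ) T, ‖F p t‖)
        = (volume (Set.Ioc (1 : ℝ) T)).toReal * ‖B p‖ := by
      intro p
      simp only [hnormF p]
      rw [setIntegral_const, smul_eq_mul]
      rfl
    exact (hsumB.mul_left _).congr fun p => (heq p).symm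
  -- per-term bound
  have hIb : ∀ p : ℕ × ℕ, ‖∫ t in Set.Ioc (1 : ℝ) T, F p t‖ ≤ 3 * ‖B p‖ := by
    intro p
    rcases eq_or_ne (B p) 0 with hB0 | hB0
    · have hz : ∀ t, F p t = 0 := fun t => by rw [hFB p t, hB0, zero_mul]
      simp only [hz, integral_zero, norm_zero, hB0, norm_zero, mul_zero, le_refl]
    · obtain ⟨m, k⟩ := p
      have hm : 2 ≤ m := by
        by_contra h
        push_neg at h
        interval_cases m
        · exact hB0 (by simp [hB])
        · refine hB0 ?_
          simp only [hB]
          rw [LSeries.term_of_ne_zero one_ne_zero]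
          simp [ArithmeticFunction.vonMangoldt_apply_one]
      have hk : 1 ≤ k := by
        by_contra h
        push_neg at h
        interval_cases k
        exact hB0 (by simp [hB])
      have hr2 : Real.log 2 ≤ Real.log m + Real.log k := by
        have h1 : Real.log 2 ≤ Real.log m :=
          Real.log_le_log (by norm_num) (by exact_mod_cast hm)
        have h2 : 0 ≤ Real.log k := log_nat_nonneg k
        linarith
      have hlog2 : (0.6931471803 : ℝ) < Real.log 2 := Real.log_two_gt_d9
      have hrpos : 0 < Real.log m + Real.log k := by linarith
      have hbne : bb (m, k) ≠ 0 := by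
        simp only [hbb, neg_mul, neg_ne_zero, mul_ne_zero_iff]
        exact ⟨Complex.ofReal_ne_zero.mpr hrpos.ne', Complex.I_ne_zero⟩
      have hival : (∫ t in Set.Ioc (1 : ℝ) T, F (m, k) t)
          = B (m, k) * ((Complex.exp (bb (m, k) * (T : ℂ))
              - Complex.exp (bb (m, k) * ((1 : ℝ) : ℂ))) / bb (m, k)) := by
        rw [← intervalIntegral.integral_of_le hT1]
        simp only [hFB (m, k)]
        rw [intervalIntegral.integral_const_mul, integral_exp_mul_complex hbne]
      rw [hival, norm_mul]
      have hnb : ‖bb (m, k)‖ = Real.log m + Real.log k := by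
        simp only [hbb, norm_mul, norm_neg, Complex.norm_real, Complex.norm_I, mul_one,
          Real.norm_eq_abs]
        exact _root_.abs_of_nonneg hrpos.le
      have hexp1 : ∀ t : ℝ, ‖Complex.exp (bb (m, k) * (t : ℂ))‖ = 1 := by
        intro t
        have hre0 : (bb (m, k) * (t : ℂ)).re = 0 := by
          simp only [hbb, neg_mul, Complex.neg_re, Complex.mul_re, Complex.mul_im,
            Complex.ofReal_re, Complex.ofReal_im, Complex.I_re, Complex.I_im]
          ring
        rw [Complex.norm_exp, hre0, Real.exp_zero]
      have hquot : ‖(Complex.exp (bb (m, k) * (T : ℂ))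
          - Complex.exp (bb (m, k) * ((1 : ℝ) : ℂ))) / bb (m, k)‖ ≤ 3 := by
        rw [norm_div, hnb]
        have hnum : ‖Complex.exp (bb (m, k) * (T : ℂ))
            - Complex.exp (bb (m, k) * ((1 : ℝ) : ℂ))‖ ≤ 2 := by
          refine (norm_sub_le _ _).trans ?_
          rw [hexp1 T, hexp1 1]
          norm_num
        rw [div_le_iff₀ hrpos]
        nlinarith
      calc ‖B (m, k)‖ * ‖(Complex.exp (bb (m, k) * (T : ℂ))
            - Complex.exp (bb (m, k) * ((1 : ℝ) : ℂ))) / bb (m, k)‖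
          ≤ ‖B (m, k)‖ * 3 := mul_le_mul_of_nonneg_left hquot (norm_nonneg _)
        _ = 3 * ‖B (m, k)‖ := mul_comm _ _
  -- main chain
  rw [intervalIntegral.integral_of_le hT1]
  have hmain : (∫ t in Set.Ioc (1 : ℝ) T,
        LSeries ↗Λ ((c : ℂ) + (t : ℂ) * I) * LSeries g ((c : ℂ) + (t : ℂ) * I))
      = ∑' p : ℕ × ℕ, ∫ t in Set.Ioc (1 : ℝ) T, F p t := by
    rw [← hswap]
    exact setIntegral_congr_fun measurableSet_Ioc fun t _ => hprod t
  rw [hmain]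
  have hsumI : Summable fun p : ℕ × ℕ => ‖∫ t in Set.Ioc (1 : ℝ) T, F p t‖ :=
    Summable.of_nonneg_of_le (fun _ => norm_nonneg _) hIb (hsumB.mul_left 3)
  refine (norm_tsum_le_tsum_norm hsumI).trans ?_
  have h1 : (∑' p : ℕ × ℕ, ‖∫ t in Set.Ioc (1 : ℝ) T, F p t‖)
      ≤ ∑' p : ℕ × ℕ, 3 * ‖B p‖ := Summable.tsum_le_tsum hIb hsumI (hsumB.mul_left 3)
  rw [tsum_mul_left] at h1
  have hSAle : (∑' m : ℕ, ‖term ↗Λ ((c : ℝ) : ℂ) m‖) ≤ 6 / d ^ 2 := by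
    refine (Summable.tsum_le_tsum (norm_term_vonMangoldt hcre) hSA (sumS_summable le_rfl hd0)).trans ?_
    refine (sumS le_rfl hd0 hd1).trans ?_
    norm_num
  have hSgle : (∑' k : ℕ, ‖term g ((c : ℝ) : ℂ) k‖) ≤ 3 * (2 * (n : ℝ)) ^ n / d ^ (n + 1) := by
    refine (Summable.tsum_le_tsum ?_ hSg (sumS_summable hn hd0)).trans ?_
    · intro k
      rw [hg]
      exact norm_term_logpow hcre n k
    · exact sumS hn hd0 hd1
  have hSg0 : 0 ≤ ∑' k : ℕ, ‖term g ((c : ℝ) : ℂ) k‖ := tsum_nonneg fun _ => norm_nonneg _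
  have h2 : (∑' p : ℕ × ℕ, ‖B p‖)
      ≤ (6 / d ^ 2) * (3 * (2 * (n : ℝ)) ^ n / d ^ (n + 1)) := by
    rw [htsumB]
    refine mul_le_mul hSAle hSgle hSg0 (by positivity)
  have hfin : 3 * ((6 / d ^ 2) * (3 * (2 * (n : ℝ)) ^ n / d ^ (n + 1)))
      = 54 * (2 * (n : ℝ)) ^ n * lgT ^ (n + 3) := by
    rw [hd]
    simp only [one_div, inv_pow, div_inv_eq_mul]
    ring
  calc (∑' p : ℕ × ℕ, ‖∫ t in Set.Ioc (1 : ℝ) T, F p t‖)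
      ≤ 3 * ∑' p : ℕ × ℕ, ‖B p‖ := h1
    _ ≤ 3 * ((6 / d ^ 2) * (3 * (2 * (n : ℝ)) ^ n / d ^ (n + 1))) := by linarith
    _ = 54 * (2 * (n : ℝ)) ^ n * lgT ^ (n + 3) := hfin
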